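/- Let E, F be Banach spaces over 𝕂 = ℝ or ℂ, suppose F has cotype q ∈ [2,∞), and let g : E → F be analytic at a point a ∈ E. Then g is absolutely (q;1)-summing at a: ∑_j ‖g(a+x_j) − g(a)‖^q < ∞ for every sequence (x_j) ∈ ℓ₁^u(E). -/

import Mathlib

open scoped ENNReal NNReal

noncomputable section

/-- A sequence `x` in `E` is weakly `q`-summable (`0 < q < ∞`), i.e. belongs to `ℓ_q^w(E)`:
`∑_j ‖φ (x j)‖^q < ∞` for every continuous linear functional `φ`. -/
def WeaklySummable (𝕜 : Type*) [RCLike 𝕜] {E : Type*} [NormedAddCommGroup E]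
    [NormedSpace 𝕜 E] (q : ℝ) (x : ℕ → E) : Prop :=
  ∀ φ : E →L[𝕜] 𝕜, Summable fun j => ‖φ (x j)‖ ^ q

/-- `F` has cotype `q` with constant `C`. -/
def HasCotypeWith (F : Type*) [NormedAddCommGroup F] (q C : ℝ) : Prop :=
  ∀ (k : ℕ) (x : Fin k → F),
    (∑ j, ‖x j‖ ^ q) ^ (1 / q) ≤
      C * ((2 : ℝ) ^ (-(k : ℝ)) *
        ∑ ε : Fin k → Bool, ‖∑ j, (if ε j then x j else -x j)‖ ^ (2 : ℝ)) ^ ((1 : ℝ) / 2)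

/-- `F` has cotype `q`. -/
def HasCotype (F : Type*) [NormedAddCommGroup F] (q : ℝ) : Prop :=
  ∃ C : ℝ, 0 ≤ C ∧ HasCotypeWith F q C

/-- Membership in `ℓ_q^u(E)`: the sequence is weakly `q`-summable and the weak `q`-norms of
its tails tend to `0`. -/
def MemLqU (𝕜 : Type*) [RCLike 𝕜] {E : Type*} [NormedAddCommGroup E]
    [NormedSpace 𝕜 E] (q : ℝ) (x : ℕ → E) : Prop :=
  (∀ φ : E →L[𝕜] 𝕜, Summable fun j => ‖φ (x j)‖ ^ q) ∧
  ∀ ε : ℝ, 0 < ε → ∃ M : ℕ, ∀ m, M ≤ m → ∀ φ : E →L[𝕜] 𝕜, ‖φ‖ ≤ 1 →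
    (∑' j : ℕ, ‖φ (x (j + m))‖ ^ q) ^ (1 / q) ≤ ε

namespace AuxSumming

def sgn (𝕜 : Type*) [RCLike 𝕜] (b : Bool) : 𝕜 := if b then 1 else -1

variable {𝕜 : Type*} [RCLike 𝕜]

lemma norm_sgn (b : Bool) : ‖sgn 𝕜 b‖ = 1 := by cases b <;> simp [sgn]

lemma sgn_mul_self (b : Bool) : sgn 𝕜 b * sgn 𝕜 b = 1 := by cases b <;> simp [sgn]

lemma orth {ι : Type*} [Fintype ι] [DecidableEq ι] (i j : ι) :
    ∑ δ : ι → Bool, sgn 𝕜 (δ i) * sgn 𝕜 (δ j)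
      = if i = j then (Fintype.card (ι → Bool) : 𝕜) else 0 := by
  rcases eq_or_ne i j with h | h
  · subst h
    simp [sgn_mul_self, Finset.card_univ]
  · simp only [if_neg h]
    have hinv : Function.Involutive (fun δ : ι → Bool => Function.update δ i (!(δ i))) := by
      intro δ
      funext l
      rcases eq_or_ne l i with hl | hl
      · subst hl; simp
      · simp [Function.update_of_ne hl]
    have hkey : ∀ δ : ι → Bool,
        sgn 𝕜 ((Function.update δ i (!(δ i))) i) * sgn 𝕜 ((Function.update δ i (!(δ i))) j)
          = -(sgn 𝕜 (δ i) * sgn 𝕜 (δ j)) := by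
      intro δ
      rw [Function.update_self, Function.update_of_ne (Ne.symm h)]
      cases δ i <;> cases δ j <;> simp [sgn]
    have h2 : -(∑ δ : ι → Bool, sgn 𝕜 (δ i) * sgn 𝕜 (δ j))
        = ∑ δ : ι → Bool, sgn 𝕜 (δ i) * sgn 𝕜 (δ j) := by
      have := Fintype.sum_bijective (fun δ : ι → Bool => Function.update δ i (!(δ i)))
        hinv.bijective
        (fun δ : ι → Bool => -(sgn 𝕜 (δ i) * sgn 𝕜 (δ j)))
        (fun δ : ι → Bool => sgn 𝕜 (δ i) * sgn 𝕜 (δ j))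
        (fun δ => by simpa using (hkey δ).symm)
      simpa [← Finset.sum_neg_distrib] using this
    have h4 : (∑ δ : ι → Bool, sgn 𝕜 (δ i) * sgn 𝕜 (δ j))
        + (∑ δ : ι → Bool, sgn 𝕜 (δ i) * sgn 𝕜 (δ j)) = 0 := by
      nth_rewrite 1 [← h2]; exact neg_add_cancel _
    exact add_self_eq_zero.mp h4

end AuxSumming

namespace AuxSumming

variable {𝕜 : Type*} [RCLike 𝕜] {E F : Type*} [NormedAddCommGroup E] [NormedSpace 𝕜 E]
  [NormedAddCommGroup F] [NormedSpace 𝕜 F]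

lemma cons_const (n : ℕ) (u : E) :
    (Fin.cons u (fun _ : Fin n => u) : Fin (n+1) → E) = fun _ => u := by
  funext i
  refine Fin.cases ?_ ?_ i
  · simp
  · intro i; simp

lemma core {ι : Type*} [Fintype ι] [DecidableEq ι]
    (x : ι → E) (w : ℝ)
    (hw : ∀ d : ι → 𝕜, (∀ j, ‖d j‖ ≤ 1) → ‖∑ j, d j • x j‖ ≤ w) :
    ∀ (n : ℕ) (A : ContinuousMultilinearMap 𝕜 (fun _ : Fin (n+1) => E) F)
      (c : ι → 𝕜), (∀ j, ‖c j‖ ≤ 1) →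
      ‖∑ j, c j • A (fun _ => x j)‖ ≤ ‖A‖ * w ^ (n+1) := by
  have hw0 : 0 ≤ w := le_trans (by simp) (hw 0 (by intro j; simp))
  intro n
  induction n with
  | zero =>
    intro A c hc
    set T := A.curryLeft with hT
    have hA : ∀ v : E, A (fun _ : Fin 1 => v) = T v (fun _ : Fin 0 => v) := by
      intro v
      rw [hT, A.curryLeft_apply]
      congr 1
      exact (cons_const 0 v).symm
    have step1 : (∑ j, c j • A (fun _ : Fin 1 => x j))
        = T (∑ j, c j • x j) (fun _ : Fin 0 => 0) := by
      rw [map_sum]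
      simp only [map_smul]
      rw [ContinuousMultilinearMap.sum_apply]
      refine Finset.sum_congr rfl fun j _ => ?_
      rw [ContinuousMultilinearMap.smul_apply]
      congr 1
      rw [hA (x j)]
      congr 1
      funext i
      exact i.elim0
    rw [step1]
    calc ‖T (∑ j, c j • x j) (fun _ : Fin 0 => 0)‖
        ≤ ‖T (∑ j, c j • x j)‖ * ∏ i : Fin 0, ‖(0 : E)‖ :=
          (T (∑ j, c j • x j)).le_opNorm _
      _ = ‖T (∑ j, c j • x j)‖ := by simp
      _ ≤ ‖T‖ * ‖∑ j, c j • x j‖ := (T).le_opNorm _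
      _ ≤ ‖A‖ * w := by
          rw [hT, A.curryLeft_norm]
          exact mul_le_mul_of_nonneg_left (hw c hc) (norm_nonneg A)
      _ = ‖A‖ * w ^ (0+1) := by ring
  | succ m IH =>
    intro A c hc
    set T := A.curryLeft with hT
    set W : ι → ι → F := fun i j => T (x i) (fun _ : Fin (m+1) => x j) with hW
    set v : (ι → Bool) → E := fun δ => ∑ i, (sgn 𝕜 (δ i) * c i) • x i with hv
    set N := Fintype.card (ι → Bool) with hN
    have hNpos : 0 < N := Fintype.card_pos
    have hkey : ∀ δ : ι → Bool, ∀ j : ι,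
        T (v δ) (fun _ : Fin (m+1) => x j) = ∑ i, (sgn 𝕜 (δ i) * c i) • W i j := by
      intro δ j
      rw [hv]
      simp only []
      rw [map_sum]
      simp only [map_smul]
      rw [ContinuousMultilinearMap.sum_apply]
      refine Finset.sum_congr rfl fun i _ => ?_
      rw [ContinuousMultilinearMap.smul_apply]
    have hWjj : ∀ j, W j j = A (fun _ : Fin (m+2) => x j) := by
      intro j
      rw [hW]
      simp only []
      rw [hT, A.curryLeft_apply]
      congr 1
      exact cons_const (m+1) (x j)
    have hident : (∑ δ : ι → Bool, ∑ j, sgn 𝕜 (δ j) • T (v δ) (fun _ : Fin (m+1) => x j))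
        = (N : 𝕜) • ∑ j, c j • A (fun _ : Fin (m+2) => x j) := by
      have e1 : ∀ δ : ι → Bool, (∑ j, sgn 𝕜 (δ j) • T (v δ) (fun _ : Fin (m+1) => x j))
          = ∑ j, ∑ i, (sgn 𝕜 (δ j) * (sgn 𝕜 (δ i) * c i)) • W i j := by
        intro δ
        refine Finset.sum_congr rfl fun j _ => ?_
        rw [hkey δ j, Finset.smul_sum]
        refine Finset.sum_congr rfl fun i _ => ?_
        rw [smul_smul]
      calc (∑ δ : ι → Bool, ∑ j, sgn 𝕜 (δ j) • T (v δ) (fun _ : Fin (m+1) => x j))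
          = ∑ δ : ι → Bool, ∑ j, ∑ i, (sgn 𝕜 (δ j) * (sgn 𝕜 (δ i) * c i)) • W i j :=
            Finset.sum_congr rfl (fun δ _ => e1 δ)
        _ = ∑ j, ∑ i, ∑ δ : ι → Bool, (sgn 𝕜 (δ j) * (sgn 𝕜 (δ i) * c i)) • W i j := by
            rw [Finset.sum_comm]
            exact Finset.sum_congr rfl fun j _ => Finset.sum_comm
        _ = ∑ j, ∑ i, ((∑ δ : ι → Bool, sgn 𝕜 (δ j) * sgn 𝕜 (δ i)) * c i) • W i j := by
            refine Finset.sum_congr rfl fun j _ => Finset.sum_congr rfl fun i _ => ?_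
            rw [← Finset.sum_smul, Finset.sum_mul]
            congr 1
            exact Finset.sum_congr rfl fun δ _ => by ring
        _ = ∑ j, ((N : 𝕜) * c j) • W j j := by
            have horth : ∀ (a b : ι), (∑ δ : ι → Bool, sgn 𝕜 (δ a) * sgn 𝕜 (δ b))
                = if a = b then (N : 𝕜) else 0 := by
              intro a b; rw [orth, ← hN]
            refine Finset.sum_congr rfl fun j _ => ?_
            simp only [horth]
            simp [ite_mul, zero_mul, ite_smul, zero_smul, Finset.sum_ite_eq]
        _ = (N : 𝕜) • ∑ j, c j • A (fun _ : Fin (m+2) => x j) := by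
            rw [Finset.smul_sum]
            refine Finset.sum_congr rfl fun j _ => ?_
            rw [hWjj j, mul_smul]
    have hconst : ∀ δ : ι → Bool,
        ‖∑ j, sgn 𝕜 (δ j) • T (v δ) (fun _ : Fin (m+1) => x j)‖ ≤ ‖A‖ * w ^ (m + 2) := by
      intro δ
      have h1 : ‖T (v δ)‖ ≤ ‖A‖ * w := by
        calc ‖T (v δ)‖ ≤ ‖T‖ * ‖v δ‖ := T.le_opNorm _
          _ ≤ ‖A‖ * w := by
              rw [hT, A.curryLeft_norm]
              refine mul_le_mul_of_nonneg_left ?_ (norm_nonneg A)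
              refine hw _ fun i => ?_
              rw [norm_mul, norm_sgn, one_mul]; exact hc i
      have h2 := IH (T (v δ)) (fun j => sgn 𝕜 (δ j)) (fun j => le_of_eq (norm_sgn _))
      calc ‖∑ j, sgn 𝕜 (δ j) • T (v δ) (fun _ : Fin (m+1) => x j)‖
          ≤ ‖T (v δ)‖ * w ^ (m+1) := h2
        _ ≤ (‖A‖ * w) * w ^ (m+1) := mul_le_mul_of_nonneg_right h1 (by positivity)
        _ = ‖A‖ * w ^ (m+2) := by ring
    have hNne : ((N : 𝕜)) ≠ 0 := Nat.cast_ne_zero.mpr hNpos.ne'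
    have hmain : (∑ j, c j • A (fun _ : Fin (m+2) => x j))
        = ((N : 𝕜))⁻¹ • ∑ δ : ι → Bool, ∑ j, sgn 𝕜 (δ j) • T (v δ) (fun _ : Fin (m+1) => x j) := by
      rw [hident, inv_smul_smul₀ hNne]
    rw [hmain, norm_smul]
    have hn1 : ‖((N : 𝕜))⁻¹‖ = (N : ℝ)⁻¹ := by rw [norm_inv, RCLike.norm_natCast]
    rw [hn1]
    have hsum : ‖∑ δ : ι → Bool, ∑ j, sgn 𝕜 (δ j) • T (v δ) (fun _ : Fin (m+1) => x j)‖
        ≤ (N : ℝ) * (‖A‖ * w ^ (m+2)) := by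
      calc ‖∑ δ : ι → Bool, ∑ j, sgn 𝕜 (δ j) • T (v δ) (fun _ : Fin (m+1) => x j)‖
          ≤ ∑ δ : ι → Bool, ‖∑ j, sgn 𝕜 (δ j) • T (v δ) (fun _ : Fin (m+1) => x j)‖ :=
            norm_sum_le _ _
        _ ≤ (N : ℝ) * (‖A‖ * w ^ (m+2)) := by
            have := Finset.sum_le_card_nsmul Finset.univ
              (fun δ : ι → Bool => ‖∑ j, sgn 𝕜 (δ j) • T (v δ) (fun _ : Fin (m+1) => x j)‖)
              (‖A‖ * w ^ (m+2)) (fun δ _ => hconst δ)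
            simpa [Finset.card_univ, nsmul_eq_mul, hN] using this
    calc (N : ℝ)⁻¹ * ‖∑ δ : ι → Bool, ∑ j, sgn 𝕜 (δ j) • T (v δ) (fun _ : Fin (m+1) => x j)‖
        ≤ (N : ℝ)⁻¹ * ((N : ℝ) * (‖A‖ * w ^ (m+2))) :=
          mul_le_mul_of_nonneg_left hsum (by positivity)
      _ = ‖A‖ * w ^ (m+1+1) := by
          have : (N : ℝ) ≠ 0 := Nat.cast_ne_zero.mpr hNpos.ne'
          field_simp

end AuxSumming

set_option maxHeartbeats 2000000 in
open AuxSumming in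
theorem analytic_summing_of_cotype'
    {𝕜 : Type*} [RCLike 𝕜] {E F : Type*}
    [NormedAddCommGroup E] [NormedSpace 𝕜 E] [CompleteSpace E]
    [NormedAddCommGroup F] [NormedSpace 𝕜 F] [CompleteSpace F]
    {q : ℝ} (hq : 2 ≤ q)
    {g : E → F} {a : E} (hg : AnalyticAt 𝕜 g a) :
    ∀ x : ℕ → E,
      ((∀ φ : E →L[𝕜] 𝕜, Summable fun j => ‖φ (x j)‖ ^ (1:ℝ)) ∧
      ∀ ε : ℝ, 0 < ε → ∃ M : ℕ, ∀ m, M ≤ m → ∀ φ : E →L[𝕜] 𝕜, ‖φ‖ ≤ 1 →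
        (∑' j : ℕ, ‖φ (x (j + m))‖ ^ (1:ℝ)) ^ (1 / (1:ℝ)) ≤ ε) →
      (∃ C : ℝ, 0 ≤ C ∧ ∀ (k : ℕ) (z : Fin k → F),
        (∑ j, ‖z j‖ ^ q) ^ (1 / q) ≤
          C * ((2 : ℝ) ^ (-(k : ℝ)) *
            ∑ ε : Fin k → Bool, ‖∑ j, (if ε j then z j else -z j)‖ ^ (2 : ℝ)) ^ ((1 : ℝ) / 2)) →
      Summable fun j => ‖g (a + x j) - g a‖ ^ q := by
  intro x hx hF
  obtain ⟨C, hC0, hcot⟩ := hF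
  obtain ⟨p, hpat⟩ := hg
  obtain ⟨r, hp⟩ := hpat
  obtain ⟨r', hr'pos, hr'r⟩ := ENNReal.lt_iff_exists_nnreal_btwn.1 hp.r_pos
  have hr'0 : 0 < r' := by exact_mod_cast hr'pos
  set ε : ℝ := (r' : ℝ) with hε_def
  have hε : 0 < ε := hr'0
  obtain ⟨M, hM⟩ := hx.2 ε hε
  have hu : Summable (fun n => ‖p n‖ * ε ^ n) :=
    p.summable_norm_mul_pow (lt_of_lt_of_le hr'r hp.r_le)
  set B : ℝ := ∑' n, ‖p n‖ * ε ^ n with hB_def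
  have hB0 : 0 ≤ B := tsum_nonneg fun n => by positivity
  -- weak tail bound
  have hweak : ∀ (k : ℕ) (d : Fin k → 𝕜), (∀ j, ‖d j‖ ≤ 1) →
      ‖∑ j : Fin k, d j • x (M + (j : ℕ))‖ ≤ ε := by
    intro k d hd
    set v := ∑ j : Fin k, d j • x (M + (j : ℕ)) with hv
    rcases eq_or_ne v 0 with h | h
    · rw [h]; simpa using hε.le
    obtain ⟨φ, hφ1, hφv⟩ := exists_dual_vector 𝕜 v (norm_ne_zero_iff.mpr h)
    have hφsum : Summable (fun j => ‖φ (x (j + M))‖) := by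
      have h1 := hx.1 φ
      simp only [Real.rpow_one] at h1
      exact (summable_nat_add_iff M).2 h1
    have htail : (∑' j : ℕ, ‖φ (x (j + M))‖) ≤ ε := by
      have h2 := hM M le_rfl φ (le_of_eq hφ1)
      simpa [Real.rpow_one] using h2
    have hnv : ‖v‖ = ‖φ v‖ := by
      rw [hφv]
      simp [RCLike.norm_ofReal]
    calc ‖v‖ = ‖φ v‖ := hnv
      _ = ‖∑ j : Fin k, φ (d j • x (M + (j : ℕ)))‖ := by rw [hv, map_sum]
      _ ≤ ∑ j : Fin k, ‖φ (d j • x (M + (j : ℕ)))‖ := norm_sum_le _ _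
      _ ≤ ∑ j : Fin k, ‖φ (x (M + (j : ℕ)))‖ := by
          refine Finset.sum_le_sum fun j _ => ?_
          rw [map_smul, norm_smul]
          calc ‖d j‖ * ‖φ (x (M + (j : ℕ)))‖ ≤ 1 * ‖φ (x (M + (j : ℕ)))‖ :=
                mul_le_mul_of_nonneg_right (hd j) (norm_nonneg _)
            _ = _ := one_mul _
      _ = ∑ j ∈ Finset.range k, ‖φ (x (j + M))‖ := by
          rw [← Fin.sum_univ_eq_sum_range (fun j => ‖φ (x (j + M))‖) k]
          exact Finset.sum_congr rfl fun j _ => by rw [add_comm]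
      _ ≤ ∑' j : ℕ, ‖φ (x (j + M))‖ :=
          Summable.sum_le_tsum _ (fun i _ => norm_nonneg _) hφsum
      _ ≤ ε := htail
  -- each x (M + i) is small and in the ball
  have hxsmall : ∀ i : ℕ, ‖x (M + i)‖ ≤ ε := by
    intro i
    have hsingle : (∑ j : Fin (i+1), (if (j:ℕ) = i then (1:𝕜) else 0) • x (M + (j:ℕ)))
        = x (M + i) := by
      rw [Finset.sum_eq_single (Fin.last i)]
      · simp [Fin.val_last]
      · intro b _ hb
        have hbne : (b : ℕ) ≠ i := by
          intro h
          exact hb (by ext; simp [h, Fin.val_last])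
        simp [hbne]
      · intro h; exact absurd (Finset.mem_univ _) h
    have h2 := hweak (i+1) (fun j => if (j:ℕ) = i then 1 else 0)
      (fun j => by by_cases h : (j:ℕ) = i <;> simp [h])
    rw [hsingle] at h2
    exact h2
  have hxball : ∀ i : ℕ, x (M + i) ∈ Metric.eball (0 : E) r := by
    intro i
    rw [Metric.mem_eball, edist_zero_right]
    calc (‖x (M + i)‖₊ : ℝ≥0∞) ≤ (r' : ℝ≥0∞) := by
          exact_mod_cast ENNReal.coe_le_coe.2 (by
            have := hxsmall i
            exact_mod_cast this)
      _ < r := hr'r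
  -- power series expansion of increments
  have hsum_j : ∀ i : ℕ,
      HasSum (fun n => if n = 0 then 0 else (p n fun _ => x (M + i)))
        (g (a + x (M + i)) - g a) := by
    intro i
    have h1 := hp.hasSum (hxball i)
    have h0 : (p 0 fun _ => x (M + i)) = g a := hp.coeff_zero _
    have h2 : HasSum (fun n => if n = 0 then (p n fun _ => x (M + i)) else 0) (g a) := by
      have h3 : HasSum (fun n => if n = 0 then (p 0 fun _ => x (M + i)) else 0)
          (p 0 fun _ => x (M + i)) := hasSum_ite_eq 0 _
      rw [h0] at h3
      convert h3 using 1
      funext n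
      by_cases hn : n = 0
      · subst hn; simp [h0]
      · simp [hn]
    have h4 := h1.sub h2
    convert h4 using 1
    funext n
    by_cases hn : n = 0 <;> simp [hn]
  -- the key uniform bound
  have hbound : ∀ (k : ℕ) (σ : Fin k → 𝕜), (∀ i, ‖σ i‖ ≤ 1) →
      ‖∑ i : Fin k, σ i • (g (a + x (M + (i:ℕ))) - g a)‖ ≤ B := by
    intro k σ hσ
    have hsumF : HasSum
        (fun n => ∑ i : Fin k, σ i • (if n = 0 then 0 else (p n fun _ => x (M + (i:ℕ)))))
        (∑ i : Fin k, σ i • (g (a + x (M + (i:ℕ))) - g a)) :=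
      hasSum_sum fun i _ => (hsum_j (i:ℕ)).const_smul (σ i)
    have hfb : ∀ n : ℕ,
        ‖∑ i : Fin k, σ i • (if n = 0 then 0 else (p n fun _ => x (M + (i:ℕ))))‖
          ≤ ‖p n‖ * ε ^ n := by
      intro n
      cases n with
      | zero =>
        have hzz : (∑ i : Fin k, σ i • (if (0:ℕ) = 0 then (0:F) else (p 0 fun _ => x (M + (i:ℕ)))))
            = (0:F) := by simp
        rw [hzz, norm_zero]
        positivity
      | succ m =>
        simp only [Nat.succ_ne_zero, if_neg (Nat.succ_ne_zero m)]
        exact core (fun i : Fin k => x (M + (i:ℕ))) ε (hweak k) m (p (m+1)) σ hσ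
    have hsf : Summable (fun n =>
        ‖∑ i : Fin k, σ i • (if n = 0 then 0 else (p n fun _ => x (M + (i:ℕ))))‖) :=
      Summable.of_nonneg_of_le (fun n => norm_nonneg _) hfb hu
    rw [← hsumF.tsum_eq]
    calc ‖∑' n, ∑ i : Fin k, σ i • (if n = 0 then 0 else (p n fun _ => x (M + (i:ℕ))))‖
        ≤ ∑' n, ‖∑ i : Fin k, σ i • (if n = 0 then 0 else (p n fun _ => x (M + (i:ℕ))))‖ :=
          norm_tsum_le_tsum_norm hsf
      _ ≤ ∑' n, ‖p n‖ * ε ^ n := Summable.tsum_le_tsum hfb hsf hu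
      _ = B := rfl
  -- cotype estimate on partial sums
  have hpart : ∀ k : ℕ,
      (∑ i ∈ Finset.range k, ‖g (a + x (M + i)) - g a‖ ^ q) ≤ (C * B) ^ q := by
    intro k
    set z : Fin k → F := fun i => g (a + x (M + (i:ℕ))) - g a with hz
    have h1 := hcot k z
    have hzb : ∀ ephi : Fin k → Bool, ‖∑ i, (if ephi i then z i else -z i)‖ ≤ B := by
      intro ephi
      have h2 := hbound k (fun i => sgn 𝕜 (ephi i)) (fun i => le_of_eq (norm_sgn _))
      have h3 : (∑ i : Fin k, (if ephi i then z i else -z i))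
          = ∑ i : Fin k, sgn 𝕜 (ephi i) • (g (a + x (M + (i:ℕ))) - g a) := by
        refine Finset.sum_congr rfl fun i _ => ?_
        rw [hz]
        cases hb : ephi i <;> simp [sgn]
      rw [h3]
      exact h2
    have h4 : ((2 : ℝ) ^ (-(k : ℝ)) *
        ∑ ephi : Fin k → Bool, ‖∑ i, (if ephi i then z i else -z i)‖ ^ (2:ℝ))
          ≤ B ^ (2:ℝ) := by
      have hterm : ∀ ephi : Fin k → Bool,
          ‖∑ i, (if ephi i then z i else -z i)‖ ^ (2:ℝ) ≤ B ^ (2:ℝ) :=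
        fun ephi => Real.rpow_le_rpow (norm_nonneg _) (hzb ephi) (by norm_num)
      have hsum2 : (∑ ephi : Fin k → Bool, ‖∑ i, (if ephi i then z i else -z i)‖ ^ (2:ℝ))
          ≤ (2 ^ k : ℝ) * B ^ (2:ℝ) := by
        have := Finset.sum_le_card_nsmul Finset.univ
          (fun ephi : Fin k → Bool => ‖∑ i, (if ephi i then z i else -z i)‖ ^ (2:ℝ))
          (B ^ (2:ℝ)) (fun ephi _ => hterm ephi)
        simpa [Finset.card_univ, nsmul_eq_mul] using this
      have h2k : (2 : ℝ) ^ (-(k : ℝ)) = ((2 : ℝ) ^ k)⁻¹ := by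
        rw [Real.rpow_neg (by norm_num), Real.rpow_natCast]
      rw [h2k]
      rw [inv_mul_le_iff₀ (by positivity)]
      calc (∑ ephi : Fin k → Bool, ‖∑ i, (if ephi i then z i else -z i)‖ ^ (2:ℝ))
          ≤ (2 ^ k : ℝ) * B ^ (2:ℝ) := hsum2
        _ = (2:ℝ) ^ k * B ^ (2:ℝ) := by norm_num
    have h5 : ((2 : ℝ) ^ (-(k : ℝ)) *
        ∑ ephi : Fin k → Bool, ‖∑ i, (if ephi i then z i else -z i)‖ ^ (2:ℝ)) ^ ((1:ℝ)/2)
          ≤ B := by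
      have hnn : (0:ℝ) ≤ (2 : ℝ) ^ (-(k : ℝ)) *
          ∑ ephi : Fin k → Bool, ‖∑ i, (if ephi i then z i else -z i)‖ ^ (2:ℝ) := by
        have : (0:ℝ) ≤ ∑ ephi : Fin k → Bool, ‖∑ i, (if ephi i then z i else -z i)‖ ^ (2:ℝ) :=
          Finset.sum_nonneg fun _ _ => Real.rpow_nonneg (norm_nonneg _) _
        positivity
      calc ((2 : ℝ) ^ (-(k : ℝ)) *
          ∑ ephi : Fin k → Bool, ‖∑ i, (if ephi i then z i else -z i)‖ ^ (2:ℝ)) ^ ((1:ℝ)/2)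
          ≤ (B ^ (2:ℝ)) ^ ((1:ℝ)/2) := Real.rpow_le_rpow hnn h4 (by norm_num)
        _ = B := by
            rw [← Real.rpow_mul hB0]
            norm_num
    have h6 : (∑ j, ‖z j‖ ^ q) ^ (1 / q) ≤ C * B := by
      calc (∑ j, ‖z j‖ ^ q) ^ (1 / q)
          ≤ C * ((2 : ℝ) ^ (-(k : ℝ)) *
            ∑ ephi : Fin k → Bool, ‖∑ i, (if ephi i then z i else -z i)‖ ^ (2:ℝ)) ^ ((1:ℝ)/2) := h1
        _ ≤ C * B := mul_le_mul_of_nonneg_left h5 hC0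
    have hq0 : (0:ℝ) < q := lt_of_lt_of_le (by norm_num) hq
    have hXnn : (0:ℝ) ≤ ∑ j, ‖z j‖ ^ q :=
      Finset.sum_nonneg fun _ _ => Real.rpow_nonneg (norm_nonneg _) _
    have h7 : (∑ j, ‖z j‖ ^ q) ≤ (C * B) ^ q := by
      have h8 : ((∑ j, ‖z j‖ ^ q) ^ (1 / q)) ^ q ≤ (C * B) ^ q :=
        Real.rpow_le_rpow (Real.rpow_nonneg hXnn _) h6 hq0.le
      rwa [← Real.rpow_mul hXnn, one_div_mul_cancel hq0.ne', Real.rpow_one] at h8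
    calc (∑ i ∈ Finset.range k, ‖g (a + x (M + i)) - g a‖ ^ q)
        = ∑ j : Fin k, ‖z j‖ ^ q := by
          rw [← Fin.sum_univ_eq_sum_range (fun i => ‖g (a + x (M + i)) - g a‖ ^ q) k]
      _ ≤ (C * B) ^ q := h7
  -- conclude summability
  have hshift : Summable (fun i => ‖g (a + x (M + i)) - g a‖ ^ q) :=
    summable_of_sum_range_le (fun i => Real.rpow_nonneg (norm_nonneg _) _) hpart
  have hshift2 : Summable (fun i => ‖g (a + x (i + M)) - g a‖ ^ q) := by
    simpa [add_comm] using hshift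
  exact (summable_nat_add_iff M).1 hshift2

/-- If `F` has cotype `q ∈ [2,∞)` and `g : E → F` is analytic at `a ∈ E`,
then `g` is absolutely `(q;1)`-summing at `a`: `∑_j ‖g(a+x_j) − g(a)‖^q < ∞` for every
`(x_j) ∈ ℓ₁^u(E)`. -/
theorem analytic_summing_of_cotype
    {𝕜 : Type*} [RCLike 𝕜] {E F : Type*}
    [NormedAddCommGroup E] [NormedSpace 𝕜 E] [CompleteSpace E]
    [NormedAddCommGroup F] [NormedSpace 𝕜 F] [CompleteSpace F]
    {q : ℝ} (hq : 2 ≤ q) (hF : HasCotype F q)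
    {g : E → F} {a : E} (hg : AnalyticAt 𝕜 g a) :
    ∀ x : ℕ → E, MemLqU 𝕜 1 x →
      Summable fun j => ‖g (a + x j) - g a‖ ^ q := by
  exact fun x hx => analytic_summing_of_cotype' hq hg x hx hF
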